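/- Let n_s ≥ 3 and φ(x) = x/√(x²+1) applied elementwise. For every φ-network f̂ of depth L and width N from ℝ^d to ℝ^m, there exists a PLN-Net f of depth L, norm size n_s, and width n_s·N from ℝ^d to ℝ^m such that f(x) = f̂(x) for all x ∈ ℝ^d. -/

import Mathlib

/-- Layer normalization on `ℝ^n`: `LN(h)ⱼ = (hⱼ − μ)/σ` when `σ ≠ 0`, and `0` when `σ = 0`. -/
noncomputable def LN {n : ℕ} (h : Fin n → ℝ) : Fin n → ℝ :=
  let μ : ℝ := (∑ i, h i) / n
  let σ : ℝ := Real.sqrt ((∑ i, (h i - μ) ^ 2) / n)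
  if σ = 0 then 0 else fun j => (h j - μ) / σ

/-- Parallel layer normalization: `N` consecutive blocks of size `ns`, `LN` on each. -/
noncomputable def PLN (ns N : ℕ) (h : Fin (N * ns) → ℝ) : Fin (N * ns) → ℝ :=
  fun i => LN (fun j : Fin ns => h (finProdFinEquiv (i.divNat, j))) i.modNat

/-- The activation function `φ(x) = x/√(x²+1)`. -/
noncomputable def phi (x : ℝ) : ℝ := x / Real.sqrt (x ^ 2 + 1)

/-- `PhiNet φ N L d m f`: `f : ℝ^d → ℝ^m` is a `φ`-network of depth `L`
(`L` elementwise `φ` layers interleaved with `L+1` affine maps), each hidden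
dimension being at most `N`. -/
inductive PhiNet (φ : ℝ → ℝ) (N : ℕ) : ℕ → (d m : ℕ) → ((Fin d → ℝ) → (Fin m → ℝ)) → Prop
  | affine {d m : ℕ} (W : Matrix (Fin m) (Fin d) ℝ) (b : Fin m → ℝ) :
      PhiNet φ N 0 d m (fun x => W.mulVec x + b)
  | layer {L d k m : ℕ} (hk : k ≤ N) (W : Matrix (Fin k) (Fin d) ℝ) (b : Fin k → ℝ)
      (g : (Fin k → ℝ) → (Fin m → ℝ)) (hg : PhiNet φ N L k m g) :
      PhiNet φ N (L + 1) d m (fun x => g (fun i => φ ((W.mulVec x + b) i)))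

/-- `PLNNet ns N L d m f`: `f : ℝ^d → ℝ^m` is a PLN-Net of depth `L` and norm size `ns`
(`L` PLN layers interleaved with `L+1` affine maps), each hidden dimension being a
multiple of `ns` of size at most `ns·N`. -/
inductive PLNNet (ns N : ℕ) : ℕ → (d m : ℕ) → ((Fin d → ℝ) → (Fin m → ℝ)) → Prop
  | affine {d m : ℕ} (W : Matrix (Fin m) (Fin d) ℝ) (b : Fin m → ℝ) :
      PLNNet ns N 0 d m (fun x => W.mulVec x + b)
  | layer {L d k m : ℕ} (hk : k ≤ N) (W : Matrix (Fin (k * ns)) (Fin d) ℝ)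
      (b : Fin (k * ns) → ℝ)
      (g : (Fin (k * ns) → ℝ) → (Fin m → ℝ)) (hg : PLNNet ns N L (k * ns) m g) :
      PLNNet ns N (L + 1) d m (fun x => g (PLN ns k (W.mulVec x + b)))

noncomputable def coefN (i : ℕ) : ℝ :=
  if i = 0 then 1 else if i = 1 then -(1/2) else if i = 2 then -(1/2) else 0

noncomputable def caddN (i : ℕ) : ℝ :=
  if i = 1 then Real.sqrt 3 / 2 else if i = 2 then -(Real.sqrt 3 / 2) else 0

lemma sum_fin_supported {ns : ℕ} (hns : 3 ≤ ns) (f : ℕ → ℝ)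
    (hf : ∀ i, 3 ≤ i → f i = 0) :
    ∑ j : Fin ns, f (j : ℕ) = f 0 + f 1 + f 2 := by
  rw [Fin.sum_univ_eq_sum_range]
  rw [← Finset.sum_subset (Finset.range_subset_range.mpr hns)
      (fun i _ hi => hf i (by simpa using hi))]
  simp [Finset.sum_range_succ]

lemma coefN_caddN_zero {i : ℕ} (hi : 3 ≤ i) : coefN i = 0 ∧ caddN i = 0 := by
  constructor <;>
  simp [coefN, caddN, show i ≠ 0 by omega, show i ≠ 1 by omega, show i ≠ 2 by omega]

lemma block_sum {ns : ℕ} (hns : 3 ≤ ns) (t : ℝ) :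
    ∑ j : Fin ns, (coefN (j : ℕ) * t + caddN (j : ℕ)) = 0 := by
  rw [sum_fin_supported hns (fun i => coefN i * t + caddN i)
    (fun i hi => by rw [(coefN_caddN_zero hi).1, (coefN_caddN_zero hi).2]; ring)]
  simp [coefN, caddN]; ring

lemma block_sumsq {ns : ℕ} (hns : 3 ≤ ns) (t : ℝ) :
    ∑ j : Fin ns, (coefN (j : ℕ) * t + caddN (j : ℕ)) ^ 2 = 3/2 * (t ^ 2 + 1) := by
  rw [sum_fin_supported hns (fun i => (coefN i * t + caddN i) ^ 2)
    (fun i hi => by rw [(coefN_caddN_zero hi).1, (coefN_caddN_zero hi).2]; ring)]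
  have h3 : Real.sqrt 3 ^ 2 = 3 := Real.sq_sqrt (by norm_num)
  simp only [coefN, caddN]
  norm_num
  nlinarith [h3]

lemma LN_block {ns : ℕ} (hns : 3 ≤ ns) (t : ℝ) (j : Fin ns) (hj : (j : ℕ) = 0) :
    LN (fun i : Fin ns => coefN (i : ℕ) * t + caddN (i : ℕ)) j
      = Real.sqrt (2 * ns / 3) * phi t := by
  have hnsR : (0:ℝ) < ns := by exact_mod_cast Nat.lt_of_lt_of_le (by norm_num) hns
  unfold LN
  simp only [block_sum hns, zero_div, sub_zero]
  rw [block_sumsq hns]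
  have hpos : 0 < Real.sqrt (3/2 * (t^2+1) / ns) := Real.sqrt_pos.mpr (by positivity)
  rw [if_neg (ne_of_gt hpos)]
  have h0 : coefN (j:ℕ) * t + caddN (j:ℕ) = t := by simp [hj, coefN, caddN]
  rw [h0]
  have e1 : (3/2*(t^2+1)/ns : ℝ) = (t^2+1) * (3/(2*ns)) := by field_simp
  rw [e1, Real.sqrt_mul (by positivity)]
  have e2 : Real.sqrt (2*(ns:ℝ)/3) * Real.sqrt (3/(2*(ns:ℝ))) = 1 := by
    rw [← Real.sqrt_mul (by positivity),
      show (2*(ns:ℝ)/3) * (3/(2*ns)) = 1 by field_simp, Real.sqrt_one]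
  have hA : 0 < Real.sqrt (t^2+1) := Real.sqrt_pos.mpr (by positivity)
  have hB : 0 < Real.sqrt (3/(2*(ns:ℝ))) := Real.sqrt_pos.mpr (by positivity)
  unfold phi
  field_simp
  linear_combination (-t) * e2

lemma PLNNet_comp_affine {ns N L k m : ℕ} {g : (Fin k → ℝ) → (Fin m → ℝ)}
    (hg : PLNNet ns N L k m g) {d : ℕ} (V : Matrix (Fin k) (Fin d) ℝ) (c : Fin k → ℝ) :
    PLNNet ns N L d m (fun x => g (V.mulVec x + c)) := by
  cases hg with
  | affine W b =>
      have h : (fun x : Fin d → ℝ => W.mulVec (V.mulVec x + c) + b)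
           = (fun x => (W * V).mulVec x + (W.mulVec c + b)) := by
        funext x
        simp [Matrix.mulVec_add, Matrix.mulVec_mulVec, add_assoc]
      exact h ▸ PLNNet.affine (W * V) (W.mulVec c + b)
  | layer hk W b g' hg' =>
      have h : (fun x : Fin d → ℝ => g' (PLN ns _ (W.mulVec (V.mulVec x + c) + b)))
           = (fun x => g' (PLN ns _ ((W * V).mulVec x + (W.mulVec c + b)))) := by
        funext x
        simp [Matrix.mulVec_add, Matrix.mulVec_mulVec, add_assoc]
      exact h ▸ PLNNet.layer hk (W * V) (W.mulVec c + b) g' hg'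

/-- Every `φ`-network of depth `L` and width `N` from `ℝ^d` to `ℝ^m`, with
`φ(x) = x/√(x²+1)`, is exactly realized by a PLN-Net of depth `L`, norm size `n_s ≥ 3`,
and width `n_s·N`. -/
theorem PLNNet_represents_deep_phiNet (ns N L d m : ℕ) (hns : 3 ≤ ns)
    (fh : (Fin d → ℝ) → (Fin m → ℝ)) (hfh : PhiNet phi N L d m fh) :
    ∃ f : (Fin d → ℝ) → (Fin m → ℝ), PLNNet ns N L d m f ∧ ∀ x, f x = fh x := by
  induction hfh with
  | affine W b => exact ⟨_, PLNNet.affine W b, fun _ => rfl⟩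
  | @layer L d k m hk W b g hg ih =>
    obtain ⟨f', hf', heq⟩ := ih
    have hnsR : (0:ℝ) < ns := by exact_mod_cast Nat.lt_of_lt_of_le (by norm_num) hns
    set j0 : Fin ns := ⟨0, by omega⟩ with hj0
    set W' : Matrix (Fin (k * ns)) (Fin d) ℝ :=
      fun p q => coefN ((p.modNat : Fin ns) : ℕ) * W p.divNat q with hW'
    set b' : Fin (k * ns) → ℝ :=
      fun p => coefN ((p.modNat : Fin ns) : ℕ) * b p.divNat
        + caddN ((p.modNat : Fin ns) : ℕ) with hb'
    set P : Matrix (Fin k) (Fin (k * ns)) ℝ :=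
      fun i q => if q = finProdFinEquiv (i, j0) then Real.sqrt (3 / (2 * ns)) else 0 with hP
    refine ⟨fun x => f' (P.mulVec (PLN ns k (W'.mulVec x + b')) + 0),
      PLNNet.layer hk W' b' _ (PLNNet_comp_affine hf' P 0), fun x => ?_⟩
    simp only []
    rw [heq]
    have key : (P.mulVec (PLN ns k (W'.mulVec x + b')) + 0)
        = fun i : Fin k => phi ((W.mulVec x + b) i) := by
      funext i
      have hdm : ∀ (j : Fin ns),
          ((finProdFinEquiv (i, j) : Fin (k * ns)).divNat,
           (finProdFinEquiv (i, j) : Fin (k * ns)).modNat) = (i, j) := by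
        intro j
        rw [← finProdFinEquiv_symm_apply]
        exact Equiv.symm_apply_apply _ _
      set t : ℝ := (W.mulVec x + b) i with ht
      have hh : ∀ j : Fin ns,
          (W'.mulVec x + b') (finProdFinEquiv (i, j)) = coefN (j : ℕ) * t + caddN (j : ℕ) := by
        intro j
        have h1 : (finProdFinEquiv (i, j) : Fin (k * ns)).divNat = i :=
          congrArg Prod.fst (hdm j)
        have h2 : (finProdFinEquiv (i, j) : Fin (k * ns)).modNat = j :=
          congrArg Prod.snd (hdm j)
        simp only [Pi.add_apply, hW', hb', Matrix.mulVec, dotProduct, h1, h2, ht]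
        rw [mul_add, Finset.mul_sum]
        ring_nf
      have hmv : (P.mulVec (PLN ns k (W'.mulVec x + b')) + 0) i
          = Real.sqrt (3 / (2 * ns)) * (PLN ns k (W'.mulVec x + b')) (finProdFinEquiv (i, j0)) := by
        simp only [Pi.add_apply, Pi.zero_apply, add_zero, hP, Matrix.mulVec,
          dotProduct, ite_mul, zero_mul, Finset.sum_ite_eq', Finset.mem_univ, if_true]
      rw [hmv]
      have hPLN : (PLN ns k (W'.mulVec x + b')) (finProdFinEquiv (i, j0))
          = Real.sqrt (2 * ns / 3) * phi t := by
        unfold PLN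
        have h1 : (finProdFinEquiv (i, j0) : Fin (k * ns)).divNat = i :=
          congrArg Prod.fst (hdm j0)
        have h2 : (finProdFinEquiv (i, j0) : Fin (k * ns)).modNat = j0 :=
          congrArg Prod.snd (hdm j0)
        rw [h1, h2]
        rw [show (fun j : Fin ns => (W'.mulVec x + b') (finProdFinEquiv (i, j)))
            = fun j : Fin ns => coefN (j : ℕ) * t + caddN (j : ℕ) from funext hh]
        exact LN_block hns t j0 rfl
      rw [hPLN, ← mul_assoc]
      rw [← Real.sqrt_mul (by positivity), show (3/(2*(ns:ℝ))) * (2*ns/3) = 1 by field_simp,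
        Real.sqrt_one, one_mul]
    rw [key]
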